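/- Fix u ≥ 1 and a finite set Val with v = |Val| ≥ 2, and fix ε > 0. Define M : Val^u → Val^u → ℝ by M x z = (exp(ε) / (v − 1 + exp(ε)))^u · exp(−ε · hammingDist(x, z)). Then: (i) M is a channel matrix (each row is a probability distribution, in particular ∑_{z ∈ Val^u} exp(−ε · hammingDist(x, z)) = ((v − 1 + exp(ε)) / exp(ε))^u for every x); (ii) M satisfies ε-differential privacy with respect to the Hamming adjacency on Val^u; (iii) ∑_{z ∈ Val^u} max_{x} M x z = (v · exp(ε) / (v − 1 + exp(ε)))^u, i.e. under the uniform input distribution the min-entropy leakage of M equals u · log₂(v · exp(ε) / (v − 1 + exp(ε))), so the leakage bound is tight. -/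

import Mathlib

/-- The Hamming graph on `Fin u → Val`: two tuples are adjacent iff they differ in
exactly one coordinate, i.e. their Hamming distance is `1`. -/
def hammingGraph (u : ℕ) (Val : Type*) [DecidableEq Val] :
    SimpleGraph (Fin u → Val) where
  Adj x y := hammingDist x y = 1
  symm := ⟨by
    intro x y h
    rwa [hammingDist_comm]⟩
  loopless := ⟨by
    intro x h
    simp [hammingDist_self] at h⟩

/-- **tightness of the leakage bound.** Define
`M x z = (e^ε / (v - 1 + e^ε))^u * exp (-ε * hammingDist x z)` on `Val^u × Val^u`.
Then `M` is a channel matrix (in particular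
`∑_z exp (-ε * hammingDist x z) = ((v - 1 + e^ε) / e^ε)^u` for every `x`), it satisfies
`ε`-differential privacy with respect to the Hamming adjacency, and
`∑_z max_x M x z = (v e^ε / (v - 1 + e^ε))^u`, i.e. under the uniform input
distribution its min-entropy leakage reaches the bound
`u * log₂ (v e^ε / (v - 1 + e^ε))`. -/
theorem dp_leakage_bound_tight (u : ℕ) (hu : 1 ≤ u)
    (Val : Type*) [Fintype Val] [DecidableEq Val]
    (hv : 2 ≤ Fintype.card Val) (ε : ℝ) (hε : 0 < ε)
    (M : (Fin u → Val) → (Fin u → Val) → ℝ)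
    (hM : ∀ x z, M x z =
      (Real.exp ε / ((Fintype.card Val : ℝ) - 1 + Real.exp ε)) ^ u *
        Real.exp (-ε * (hammingDist x z : ℝ))) :
    (∀ x : Fin u → Val, ∑ z : Fin u → Val, Real.exp (-ε * (hammingDist x z : ℝ)) =
        (((Fintype.card Val : ℝ) - 1 + Real.exp ε) / Real.exp ε) ^ u) ∧
    (∀ x z, 0 ≤ M x z) ∧
    (∀ x, ∑ z, M x z = 1) ∧
    (∀ x x', (hammingGraph u Val).Adj x x' → ∀ z, M x z ≤ Real.exp ε * M x' z) ∧
    (∑ z, ⨆ x, M x z) =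
      ((Fintype.card Val : ℝ) * Real.exp ε /
        ((Fintype.card Val : ℝ) - 1 + Real.exp ε)) ^ u ∧
    Real.logb 2 (∑ z, ⨆ x, M x z) =
      (u : ℝ) * Real.logb 2 ((Fintype.card Val : ℝ) * Real.exp ε /
        ((Fintype.card Val : ℝ) - 1 + Real.exp ε)) := by
  haveI : Nonempty Val := Fintype.card_pos_iff.mp (by omega)
  have hv1 : (2:ℝ) ≤ (Fintype.card Val : ℝ) := by exact_mod_cast hv
  have hexp : (0:ℝ) < Real.exp ε := Real.exp_pos ε
  have hD : (0:ℝ) < (Fintype.card Val : ℝ) - 1 + Real.exp ε := by linarith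
  have hne : Real.exp ε ≠ 0 := ne_of_gt hexp
  -- distance to product
  have hdist : ∀ x z : Fin u → Val, Real.exp (-ε * (hammingDist x z : ℝ)) =
      ∏ i, (if x i = z i then (1:ℝ) else Real.exp (-ε)) := by
    intro x z
    have hcard : ((hammingDist x z : ℕ) : ℝ) =
        ∑ i, (if x i = z i then (0:ℝ) else 1) := by
      rw [hammingDist, Finset.card_filter]
      push_cast
      exact Finset.sum_congr rfl fun i _ => by by_cases h : x i = z i <;> simp [h]
    rw [hcard, Finset.mul_sum, Real.exp_sum]
    exact Finset.prod_congr rfl fun i _ => by by_cases h : x i = z i <;> simp [h]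
  -- coordinate sum
  have hcoord : ∀ a : Val, ∑ b : Val, (if a = b then (1:ℝ) else Real.exp (-ε)) =
      ((Fintype.card Val : ℝ) - 1 + Real.exp ε) / Real.exp ε := by
    intro a
    have : ∑ b : Val, (if a = b then (1:ℝ) else Real.exp (-ε)) =
        ∑ b : Val, (Real.exp (-ε) + if a = b then 1 - Real.exp (-ε) else 0) := by
      exact Finset.sum_congr rfl fun b _ => by by_cases h : a = b <;> simp [h]
    rw [this, Finset.sum_add_distrib, Finset.sum_ite_eq, Finset.sum_const]
    simp only [Finset.mem_univ, if_true, Finset.card_univ, nsmul_eq_mul]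
    rw [Real.exp_neg]
    field_simp
    ring
  have key : ∀ x : Fin u → Val,
      ∑ z : Fin u → Val, Real.exp (-ε * (hammingDist x z : ℝ)) =
      (((Fintype.card Val : ℝ) - 1 + Real.exp ε) / Real.exp ε) ^ u := by
    intro x
    calc ∑ z : Fin u → Val, Real.exp (-ε * (hammingDist x z : ℝ))
        = ∑ z : Fin u → Val, ∏ i, (if x i = z i then (1:ℝ) else Real.exp (-ε)) := by
          exact Finset.sum_congr rfl fun z _ => hdist x z
      _ = ∏ i : Fin u, ∑ b : Val, (if x i = b then (1:ℝ) else Real.exp (-ε)) :=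
          (Fintype.prod_sum (κ := fun _ : Fin u => Val)
            (fun i b => if x i = b then (1:ℝ) else Real.exp (-ε))).symm
      _ = (((Fintype.card Val : ℝ) - 1 + Real.exp ε) / Real.exp ε) ^ u := by
          rw [Finset.prod_congr rfl fun i _ => hcoord (x i)]
          simp
          rw [div_pow]
  have hMpos : ∀ x z, 0 ≤ M x z := by
    intro x z
    rw [hM]
    positivity
  have hrow : ∀ x, ∑ z, M x z = 1 := by
    intro x
    simp only [hM, ← Finset.mul_sum]
    rw [key, div_pow, div_pow, div_mul_div_comm, mul_comm]
    rw [div_self]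
    positivity
  have hDP : ∀ x x', (hammingGraph u Val).Adj x x' → ∀ z, M x z ≤ Real.exp ε * M x' z := by
    intro x x' hadj z
    have htri : (hammingDist x z : ℝ) ≥ (hammingDist x' z : ℝ) - 1 := by
      have := hammingDist_triangle x' x z
      have hxx : hammingDist x' x = 1 := by
        rw [hammingDist_comm]; exact hadj
      rw [hxx] at this
      have : (hammingDist x' z : ℝ) ≤ 1 + (hammingDist x z : ℝ) := by exact_mod_cast this
      linarith
    rw [hM, hM, mul_comm (Real.exp ε) _, mul_assoc, ← Real.exp_add]
    apply mul_le_mul_of_nonneg_left _ (by positivity)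
    apply Real.exp_le_exp.mpr
    nlinarith
  have hsup : ∀ z, (⨆ x, M x z) =
      (Real.exp ε / ((Fintype.card Val : ℝ) - 1 + Real.exp ε)) ^ u := by
    intro z
    apply le_antisymm
    · apply ciSup_le
      intro x
      rw [hM]
      calc _ ≤ (Real.exp ε / ((Fintype.card Val : ℝ) - 1 + Real.exp ε)) ^ u * 1 := by
            apply mul_le_mul_of_nonneg_left _ (by positivity)
            rw [Real.exp_le_one_iff]
            have : (0:ℝ) ≤ (hammingDist x z : ℝ) := Nat.cast_nonneg _
            nlinarith
        _ = _ := mul_one _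
    · have hle := le_ciSup (f := fun x => M x z)
        (Set.Finite.bddAbove (Set.finite_range _)) z
      calc (Real.exp ε / ((Fintype.card Val : ℝ) - 1 + Real.exp ε)) ^ u
          = M z z := by rw [hM]; simp
        _ ≤ _ := hle
  have hsum : (∑ z, ⨆ x, M x z) =
      ((Fintype.card Val : ℝ) * Real.exp ε /
        ((Fintype.card Val : ℝ) - 1 + Real.exp ε)) ^ u := by
    rw [Finset.sum_congr rfl fun z _ => hsup z, Finset.sum_const, Finset.card_univ,
      Fintype.card_fun, Fintype.card_fin, nsmul_eq_mul]
    rw [mul_div_assoc, mul_pow]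
    push_cast
    ring
  refine ⟨key, hMpos, hrow, hDP, hsum, ?_⟩
  rw [hsum, Real.logb_pow]
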